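/- arXiv:2105.03325 — 6 statements merged into one kernel-verified Lean document; each statement's English description precedes it below -/
import Mathlib

section
/- Let p ∈ (0,1) and let w₁, w₋₁, c₁, c₋₁ be real numbers satisfying conditions C1–C3 with w₁ > 0 and w₋₁ > 0. Let Y₁ and Y₋₁ be square-integrable real random variables on a probability space with E[Y₁] − E[Y₋₁] = τ₀. Then for every real number g, the function L(t) = p·w₁·E[(Y₁ − g − c₁·t)²] + (1−p)·w₋₁·E[(Y₋₁ − g − c₋₁·t)²] has a unique minimizer over t ∈ ℝ, namely t = τ₀. -/
open MeasureTheory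

lemma key_expand {Ω : Type*} [MeasurableSpace Ω] (P : Measure Ω) [IsProbabilityMeasure P]
    (Z : Ω → ℝ) (hZ : MemLp Z 2 P) (a : ℝ) :
    ∫ ω, (Z ω - a) ^ 2 ∂P
      = (∫ ω, (Z ω) ^ 2 ∂P) - 2 * a * (∫ ω, Z ω ∂P) + a ^ 2 := by
  have h2 : Integrable (fun ω => (Z ω) ^ 2) P := by
    simpa [sq] using hZ.integrable_sq
  have h1 : Integrable Z P := hZ.integrable one_le_two
  have hrw : ∀ ω, (Z ω - a) ^ 2 = (Z ω) ^ 2 - 2 * a * Z ω + a ^ 2 := by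
    intro ω; ring
  simp_rw [hrw]
  have hI : Integrable (fun ω => (Z ω) ^ 2 - 2 * a * Z ω) P := h2.sub (h1.const_mul _)
  rw [integral_add hI (integrable_const _),
    integral_sub h2 (h1.const_mul _), integral_const_mul, integral_const]
  simp

/-- Property 1 (square-error loss): under conditions C1–C3 with positive weights,
the weighted L₂ population objective has unique minimizer at the treatment effect τ₀. -/
theorem stmt0 {Ω : Type*} [MeasurableSpace Ω] (P : Measure Ω) [IsProbabilityMeasure P]
    (p w1 wm1 c1 cm1 τ0 : ℝ) (hp : p ∈ Set.Ioo (0 : ℝ) 1)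
    (hC1 : p * w1 * c1 + (1 - p) * wm1 * cm1 = 0)
    (hC2 : c1 - cm1 = 1)
    (hC3 : w1 * c1 ≠ 0 ∧ wm1 * cm1 ≠ 0)
    (hw1 : 0 < w1) (hwm1 : 0 < wm1)
    (Y1 Ym1 : Ω → ℝ)
    (hY1 : MemLp Y1 2 P) (hYm1 : MemLp Ym1 2 P)
    (hτ : (∫ ω, Y1 ω ∂P) - (∫ ω, Ym1 ω ∂P) = τ0)
    (g : ℝ) :
    ∀ t : ℝ, t ≠ τ0 →
      p * w1 * (∫ ω, (Y1 ω - g - c1 * τ0) ^ 2 ∂P)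
          + (1 - p) * wm1 * (∫ ω, (Ym1 ω - g - cm1 * τ0) ^ 2 ∂P)
        < p * w1 * (∫ ω, (Y1 ω - g - c1 * t) ^ 2 ∂P)
          + (1 - p) * wm1 * (∫ ω, (Ym1 ω - g - cm1 * t) ^ 2 ∂P) := by
  intro t ht
  -- shifted variables
  have hZ1 : MemLp (fun ω => Y1 ω - g) 2 P := hY1.sub (memLp_const g)
  have hZm1 : MemLp (fun ω => Ym1 ω - g) 2 P := hYm1.sub (memLp_const g)
  have e1 : ∀ a : ℝ, ∫ ω, (Y1 ω - g - a) ^ 2 ∂P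
      = (∫ ω, (Y1 ω - g) ^ 2 ∂P) - 2 * a * (∫ ω, (Y1 ω - g) ∂P) + a ^ 2 :=
    fun a => key_expand P (fun ω => Y1 ω - g) hZ1 a
  have em1 : ∀ a : ℝ, ∫ ω, (Ym1 ω - g - a) ^ 2 ∂P
      = (∫ ω, (Ym1 ω - g) ^ 2 ∂P) - 2 * a * (∫ ω, (Ym1 ω - g) ∂P) + a ^ 2 :=
    fun a => key_expand P (fun ω => Ym1 ω - g) hZm1 a
  have hint1 : ∫ ω, (Y1 ω - g) ∂P = (∫ ω, Y1 ω ∂P) - g := by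
    rw [integral_sub (hY1.integrable one_le_two) (integrable_const g), integral_const]
    simp
  have hintm1 : ∫ ω, (Ym1 ω - g) ∂P = (∫ ω, Ym1 ω ∂P) - g := by
    rw [integral_sub (hYm1.integrable one_le_two) (integrable_const g), integral_const]
    simp
  have hm : (∫ ω, (Y1 ω - g) ∂P) - (∫ ω, (Ym1 ω - g) ∂P) = τ0 := by
    rw [hint1, hintm1]; linarith
  -- positivity of c1
  have hc1ne : c1 ≠ 0 := fun h => hC3.1 (by simp [h])
  have hc1 : 0 < c1 := by
    rcases hc1ne.lt_or_gt with h | h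
    · exfalso
      have h1 : 0 < (1 - p) * wm1 := mul_pos (by linarith [hp.2]) hwm1
      have hpw : 0 < p * w1 := mul_pos hp.1 hw1
      have h2 : 0 < (1 - p) * wm1 * cm1 := by nlinarith
      have hcm : 0 < cm1 := by nlinarith
      linarith
    · exact h
  have hApos : 0 < p * w1 * c1 := mul_pos (mul_pos hp.1 hw1) hc1
  have hsq : 0 < (t - τ0) ^ 2 := by
    have : t - τ0 ≠ 0 := sub_ne_zero.mpr ht
    positivity
  rw [e1 (c1 * τ0), e1 (c1 * t), em1 (cm1 * τ0), em1 (cm1 * t)]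
  set m1 := ∫ ω, (Y1 ω - g) ∂P
  set mm := ∫ ω, (Ym1 ω - g) ∂P
  set I1 := ∫ ω, (Y1 ω - g) ^ 2 ∂P
  set Im := ∫ ω, (Ym1 ω - g) ^ 2 ∂P
  have heq :
      (p * w1 * (I1 - 2 * (c1 * t) * m1 + (c1 * t) ^ 2)
        + (1 - p) * wm1 * (Im - 2 * (cm1 * t) * mm + (cm1 * t) ^ 2))
      - (p * w1 * (I1 - 2 * (c1 * τ0) * m1 + (c1 * τ0) ^ 2)
        + (1 - p) * wm1 * (Im - 2 * (cm1 * τ0) * mm + (cm1 * τ0) ^ 2))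
      = p * w1 * c1 * (t - τ0) ^ 2 := by
    linear_combination (-2 * (t - τ0) * mm + (t ^ 2 - τ0 ^ 2) * cm1) * hC1
      + (t ^ 2 - τ0 ^ 2) * (p * w1 * c1) * hC2
      + (-2 * (t - τ0) * (p * w1 * c1)) * hm
  nlinarith [mul_pos hApos hsq, heq]
end

section
/- Let p ∈ (0,1) and let w₁, w₋₁, c₁, c₋₁ be real numbers satisfying conditions C1 and C2. Let (Ω, ℱ, ℙ) be a probability space, T : Ω → ℝ a random variable with T ∈ {−1, 1} almost surely and ℙ(T = 1) = p, and Y : Ω → ℝ integrable, with arm means μ₁, μ₋₁ defined by E[Y·1_{T=1}] = p·μ₁ and E[Y·1_{T=−1}] = (1−p)·μ₋₁. Assume μ₁ − μ₋₁ = τ₀. Then for every real number g, E[w(T)·c(T)·(Y − g − c(T)·τ₀)] = 0, where w(1) = w₁, w(−1) = w₋₁, c(1) = c₁, c(−1) = c₋₁. -/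
open MeasureTheory

/-- The unified score S = w(T)·c(T)·(Y − g − c(T)·τ₀) has mean zero under C1–C2. -/
theorem stmt1 {Ω : Type*} [MeasurableSpace Ω] (P : Measure Ω) [IsProbabilityMeasure P]
    (p w1 wm1 c1 cm1 μ1 μm1 τ0 : ℝ) (hp : p ∈ Set.Ioo (0 : ℝ) 1)
    (hC1 : p * w1 * c1 + (1 - p) * wm1 * cm1 = 0)
    (hC2 : c1 - cm1 = 1)
    (T Y : Ω → ℝ) (hT : Measurable T)
    (hT1 : ∀ᵐ ω ∂P, T ω = 1 ∨ T ω = -1)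
    (hpT : P {ω | T ω = 1} = ENNReal.ofReal p)
    (hY : Integrable Y P)
    (hμ1 : ∫ ω in {ω | T ω = 1}, Y ω ∂P = p * μ1)
    (hμm1 : ∫ ω in {ω | T ω = -1}, Y ω ∂P = (1 - p) * μm1)
    (hτ : μ1 - μm1 = τ0)
    (w c : ℝ → ℝ) (hw1 : w 1 = w1) (hwm1 : w (-1) = wm1)
    (hc1 : c 1 = c1) (hcm1 : c (-1) = cm1) :
    ∀ g : ℝ, ∫ ω, w (T ω) * c (T ω) * (Y ω - g - c (T ω) * τ0) ∂P = 0 := by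
  intro g
  set A : Set Ω := {ω | T ω = 1} with hA
  set B : Set Ω := {ω | T ω = -1} with hB
  have hAm : MeasurableSet A := hT (measurableSet_singleton 1)
  have hBm : MeasurableSet B := hT (measurableSet_singleton (-1))
  set k1 : ℝ := w1 * c1 with hk1
  set k2 : ℝ := wm1 * cm1 with hk2
  set d1 : ℝ := -(k1 * (g + c1 * τ0)) with hd1
  set d2 : ℝ := -(k2 * (g + cm1 * τ0)) with hd2
  have hBc : B =ᵐ[P] Aᶜ := by
    filter_upwards [hT1] with ω hω
    rcases hω with h | h <;>
      · show (ω ∈ B) = (ω ∈ Aᶜ)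
        simp only [hA, hB, Set.mem_compl_iff, Set.mem_setOf_eq, h, eq_iff_iff]
        norm_num
  have hPA : (P A).toReal = p := by
    rw [hpT, ENNReal.toReal_ofReal hp.1.le]
  have hPB : (P B).toReal = 1 - p := by
    rw [measure_congr hBc]
    show (P Aᶜ).toReal = 1 - p
    rw [prob_compl_eq_one_sub hAm, hpT]
    rw [ENNReal.toReal_sub_of_le (by simpa using ENNReal.ofReal_le_one.2 hp.2.le) ENNReal.one_ne_top]
    simp [ENNReal.toReal_ofReal hp.1.le]
  -- define auxiliary function
  have hint1 : Integrable (fun ω => k1 * Y ω + d1) P :=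
    (hY.const_mul k1).add (integrable_const d1)
  have hint2 : Integrable (fun ω => k2 * Y ω + d2) P :=
    (hY.const_mul k2).add (integrable_const d2)
  have hfeq : (fun ω => w (T ω) * c (T ω) * (Y ω - g - c (T ω) * τ0)) =ᵐ[P]
      (fun ω => A.indicator (fun ω => k1 * Y ω + d1) ω
        + B.indicator (fun ω => k2 * Y ω + d2) ω) := by
    filter_upwards [hT1] with ω hω
    rcases hω with h | h
    · have hωA : ω ∈ A := h
      have hωB : ω ∉ B := by simp [hB, Set.mem_setOf_eq, h]; norm_num
      simp only [Set.indicator_of_mem hωA, Set.indicator_of_notMem hωB, h, hw1, hc1,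
        hk1, hd1, add_zero]
      ring
    · have hωA : ω ∉ A := by simp [hA, Set.mem_setOf_eq, h]; norm_num
      have hωB : ω ∈ B := h
      simp only [Set.indicator_of_mem hωB, Set.indicator_of_notMem hωA, h, hwm1, hcm1,
        hk2, hd2, zero_add]
      ring
  rw [integral_congr_ae hfeq]
  rw [integral_add (hint1.indicator hAm) (hint2.indicator hBm),
    integral_indicator hAm, integral_indicator hBm]
  have h1 : ∫ ω in A, (k1 * Y ω + d1) ∂P = k1 * (p * μ1) + d1 * p := by
    rw [integral_add (hY.restrict.const_mul k1) (integrable_const d1)]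
    rw [integral_const_mul, integral_const]
    simp [Measure.restrict_apply_univ, measureReal_def, hPA, hμ1, smul_eq_mul, mul_comm]
  have h2 : ∫ ω in B, (k2 * Y ω + d2) ∂P = k2 * ((1 - p) * μm1) + d2 * (1 - p) := by
    rw [integral_add (hY.restrict.const_mul k2) (integrable_const d2)]
    rw [integral_const_mul, integral_const]
    simp [Measure.restrict_apply_univ, measureReal_def, hPB, hμm1, smul_eq_mul, mul_comm]
  rw [h1, h2, hd1, hd2]
  subst hτ
  simp only [hk1, hk2]
  linear_combination (μm1 - g - cm1 * (μ1 - μm1)) * hC1 - (μ1 - μm1) * p * w1 * c1 * hC2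
end

section
/- Let (Ω, ℱ, ℙ) be a probability space, T : Ω → ℝ a random variable with T ∈ {−1, 1} almost surely and ℙ(T = 1) = p ∈ (0,1), and Y : Ω → ℝ integrable, with arm means μ₁, μ₋₁ defined by E[Y·1_{T=1}] = p·μ₁ and E[Y·1_{T=−1}] = (1−p)·μ₋₁; set τ₀ = μ₁ − μ₋₁. Let p̂ ∈ (0,1) and m₁, m₋₁ ∈ ℝ be working (possibly incorrect) values of the propensity score and arm means, and set g = (1−p̂)·m₁ + p̂·m₋₁. Define the AIPW score S = ((T − 2p̂ + 1)/(2p̂(1−p̂)))·(Y − g − (2p̂(1−p̂)/(T − 2p̂ + 1))·τ₀). If either p̂ = p, or both m₁ = μ₁ and m₋₁ = μ₋₁, then E[S] = 0. -/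
open MeasureTheory

/-- Double robustness of the AIPW score: it has mean zero at the true τ₀ if either
the propensity model or both arm-mean models are correctly specified. -/
theorem stmt7 {Ω : Type*} [MeasurableSpace Ω] (P : Measure Ω) [IsProbabilityMeasure P]
    (p μ1 μm1 τ0 : ℝ) (hp : p ∈ Set.Ioo (0 : ℝ) 1)
    (T Y : Ω → ℝ) (hT : Measurable T)
    (hT1 : ∀ᵐ ω ∂P, T ω = 1 ∨ T ω = -1)
    (hpT : P {ω | T ω = 1} = ENNReal.ofReal p)
    (hY : Integrable Y P)
    (hμ1 : ∫ ω in {ω | T ω = 1}, Y ω ∂P = p * μ1)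
    (hμm1 : ∫ ω in {ω | T ω = -1}, Y ω ∂P = (1 - p) * μm1)
    (hτ : τ0 = μ1 - μm1)
    (phat m1 mm1 g : ℝ) (hphat : phat ∈ Set.Ioo (0 : ℝ) 1)
    (hg : g = (1 - phat) * m1 + phat * mm1)
    (hrobust : phat = p ∨ (m1 = μ1 ∧ mm1 = μm1)) :
    ∫ ω, ((T ω - 2 * phat + 1) / (2 * phat * (1 - phat))) *
        (Y ω - g - (2 * phat * (1 - phat) / (T ω - 2 * phat + 1)) * τ0) ∂P = 0 := by
  obtain ⟨hp0, hp1⟩ := hp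
  obtain ⟨hq0, hq1⟩ := hphat
  have hq0' : phat ≠ 0 := ne_of_gt hq0
  have hq1' : (1 - phat) ≠ 0 := by linarith
  set A : Set Ω := {ω | T ω = 1} with hAdef
  set B : Set Ω := {ω | T ω = -1} with hBdef
  have hmA : MeasurableSet A := hT (measurableSet_singleton 1)
  have hmB : MeasurableSet B := hT (measurableSet_singleton (-1))
  have hPA : (P A).toReal = p := by rw [hpT]; exact ENNReal.toReal_ofReal hp0.le
  have hBAc : B =ᵐ[P] (Aᶜ : Set Ω) := by
    rw [Filter.eventuallyEq_set]
    filter_upwards [hT1] with ω hω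
    rcases hω with h | h <;> simp [hAdef, hBdef, h] <;> norm_num
  have hPB : (P B).toReal = 1 - p := by
    rw [measure_congr hBAc, measure_compl hmA (measure_ne_top _ _), hpT, measure_univ]
    rw [ENNReal.toReal_sub_of_le (by simpa using ENNReal.ofReal_le_one.2 hp1.le) ENNReal.one_ne_top]
    simp [ENNReal.toReal_ofReal hp0.le]
  set h1 : Ω → ℝ := fun ω => (Y ω - g) / phat with hh1
  set h2 : Ω → ℝ := fun ω => -(Y ω - g) / (1 - phat) with hh2
  have hi1 : Integrable h1 P := (hY.sub (integrable_const g)).div_const _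
  have hi2 : Integrable h2 P := ((hY.sub (integrable_const g)).neg).div_const _
  have hae : (fun ω => ((T ω - 2 * phat + 1) / (2 * phat * (1 - phat))) *
        (Y ω - g - (2 * phat * (1 - phat) / (T ω - 2 * phat + 1)) * τ0))
      =ᵐ[P] fun ω => (A.indicator h1 ω + B.indicator h2 ω) + (-τ0) := by
    filter_upwards [hT1] with ω hω
    rcases hω with h | h
    · have hA1 : ω ∈ A := h
      have hB1 : ω ∉ B := by simp [hBdef, h]; norm_num
      rw [Set.indicator_of_mem hA1, Set.indicator_of_notMem hB1, h, hh1]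
      have : (1 : ℝ) - 2 * phat + 1 ≠ 0 := by intro hc; nlinarith
      field_simp
      ring
    · have hA1 : ω ∉ A := by simp [hAdef, h]; norm_num
      have hB1 : ω ∈ B := h
      rw [Set.indicator_of_notMem hA1, Set.indicator_of_mem hB1, h, hh2]
      have : (-1 : ℝ) - 2 * phat + 1 ≠ 0 := by
        intro hc; apply hq0'; linarith
      field_simp
      ring
  have hiA : Integrable (fun a => A.indicator h1 a) P := hi1.indicator hmA
  have hiB : Integrable (fun a => B.indicator h2 a) P := hi2.indicator hmB
  have hi12 : Integrable (fun a => A.indicator h1 a + B.indicator h2 a) P := hiA.add hiB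
  rw [integral_congr_ae hae]
  rw [integral_add hi12 (integrable_const _)]
  rw [integral_add hiA hiB,
    integral_indicator hmA, integral_indicator hmB, integral_const]
  have e1 : ∫ x in A, h1 x ∂P = (p * μ1 - p * g) / phat := by
    rw [hh1]
    rw [integral_div]
    rw [integral_sub hY.integrableOn (integrableOn_const (measure_ne_top P A))]
    rw [setIntegral_const, smul_eq_mul, measureReal_def, hPA, hμ1]
  have e2 : ∫ x in B, h2 x ∂P = -((1 - p) * μm1 - (1 - p) * g) / (1 - phat) := by
    rw [hh2]
    simp only [neg_div, neg_sub]
    rw [integral_div]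
    rw [integral_sub (integrableOn_const (measure_ne_top P B) : IntegrableOn (fun _ => g) B P) hY.integrableOn]
    rw [setIntegral_const, smul_eq_mul, measureReal_def, hPB, hμm1]
  rw [e1, e2, probReal_univ]
  simp only [ENNReal.toReal_one, one_smul]
  subst hτ hg
  rcases hrobust with h | ⟨h1', h2'⟩
  · subst h
    field_simp
    ring
  · subst h1' h2'
    field_simp
    ring
end

section
/- Let p ∈ (0,1) and let w₁, w₋₁, c₁, c₋₁ be real numbers, all nonzero, satisfying condition C1: p·w₁·c₁ + (1−p)·w₋₁·c₋₁ = 0. Let Y₁, Y₋₁ be square-integrable real random variables with means μ₁, μ₋₁, let τ₀ ∈ ℝ, and define for g ∈ ℝ the augmented-score second moment F(g) = p·w₁²·c₁²·E[(Y₁ − g − c₁·τ₀)²] + (1−p)·w₋₁²·c₋₁²·E[(Y₋₁ − g − c₋₁·τ₀)²]. Set g₀ = (1−p)·(μ₁ − c₁·τ₀) + p·(μ₋₁ − c₋₁·τ₀) and A = p·w₁²·c₁² + (1−p)·w₋₁²·c₋₁². Then for every g ∈ ℝ, F(g) = F(g₀) + A·(g₀ − g)², A > 0, and consequently g₀ is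 the unique minimizer of F. -/
open MeasureTheory

lemma shift_sq {Ω : Type*} [MeasurableSpace Ω] (P : Measure Ω) [IsProbabilityMeasure P]
    (Y : Ω → ℝ) (hY : MemLp Y 2 P) (g g' c : ℝ) :
    ∫ ω, (Y ω - g - c) ^ 2 ∂P =
      (∫ ω, (Y ω - g' - c) ^ 2 ∂P) + 2 * (g' - g) * ((∫ ω, Y ω ∂P) - g' - c)
        + (g' - g) ^ 2 := by
  have hYe : MemLp (fun ω => Y ω - (g' + c)) 2 P := hY.sub (memLp_const (g' + c))
  have hsq : Integrable (fun ω => (Y ω - g' - c) ^ 2) P := by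
    have := hYe.integrable_sq
    simpa [sub_sub, sq] using this
  have hint : Integrable Y P := hY.integrable one_le_two
  have hlin : Integrable (fun ω => 2 * (g' - g) * (Y ω - g' - c)) P := by
    have := ((hint.sub (integrable_const g')).sub (integrable_const c)).const_mul
      (2 * (g' - g))
    simpa using this
  have h12 : Integrable (fun ω => (Y ω - g' - c) ^ 2 + 2 * (g' - g) * (Y ω - g' - c)) P :=
    hsq.add hlin
  have key : ∀ ω, (Y ω - g - c) ^ 2 =
      ((Y ω - g' - c) ^ 2 + 2 * (g' - g) * (Y ω - g' - c)) + (g' - g) ^ 2 := by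
    intro ω; ring
  calc ∫ ω, (Y ω - g - c) ^ 2 ∂P
      = ∫ ω, (((Y ω - g' - c) ^ 2 + 2 * (g' - g) * (Y ω - g' - c)) + (g' - g) ^ 2) ∂P := by
        simp_rw [key]
    _ = (∫ ω, (Y ω - g' - c) ^ 2 ∂P) + (∫ ω, 2 * (g' - g) * (Y ω - g' - c) ∂P)
          + (g' - g) ^ 2 := by
        rw [integral_add h12 (integrable_const _), integral_add hsq hlin, integral_const]
        simp
    _ = _ := by
        have hYg : Integrable (fun a => Y a - g') P := hint.sub (integrable_const g')
        rw [integral_const_mul, integral_sub hYg (integrable_const c),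
          integral_sub hint (integrable_const g'), integral_const, integral_const]
        simp

/-- Orthogonal decomposition of the augmented-score second moment (Property 2 proof):
F(g) = F(g₀) + A·(g₀ − g)² with A > 0, so g₀ is the unique minimizer. -/
theorem stmt10 {Ω : Type*} [MeasurableSpace Ω] (P : Measure Ω) [IsProbabilityMeasure P]
    (p w1 wm1 c1 cm1 μ1 μm1 τ0 g0 A : ℝ) (hp : p ∈ Set.Ioo (0 : ℝ) 1)
    (hw1 : w1 ≠ 0) (hwm1 : wm1 ≠ 0) (hc1 : c1 ≠ 0) (hcm1 : cm1 ≠ 0)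
    (hC1 : p * w1 * c1 + (1 - p) * wm1 * cm1 = 0)
    (Y1 Ym1 : Ω → ℝ) (hY1 : MemLp Y1 2 P) (hYm1 : MemLp Ym1 2 P)
    (hm1 : ∫ ω, Y1 ω ∂P = μ1) (hmm1 : ∫ ω, Ym1 ω ∂P = μm1)
    (F : ℝ → ℝ)
    (hF : ∀ g, F g =
      p * w1 ^ 2 * c1 ^ 2 * (∫ ω, (Y1 ω - g - c1 * τ0) ^ 2 ∂P)
        + (1 - p) * wm1 ^ 2 * cm1 ^ 2 * (∫ ω, (Ym1 ω - g - cm1 * τ0) ^ 2 ∂P))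
    (hg0 : g0 = (1 - p) * (μ1 - c1 * τ0) + p * (μm1 - cm1 * τ0))
    (hA : A = p * w1 ^ 2 * c1 ^ 2 + (1 - p) * wm1 ^ 2 * cm1 ^ 2) :
    (∀ g : ℝ, F g = F g0 + A * (g0 - g) ^ 2) ∧ 0 < A ∧
    (∀ g : ℝ, g ≠ g0 → F g0 < F g) := by
  obtain ⟨hp0, hp1⟩ := hp
  have hp1' : 0 < 1 - p := by linarith
  have hApos : 0 < A := by
    rw [hA]; positivity
  have hdecomp : ∀ g : ℝ, F g = F g0 + A * (g0 - g) ^ 2 := by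
    intro g
    have e1 := shift_sq P Y1 hY1 g g0 (c1 * τ0)
    have e2 := shift_sq P Ym1 hYm1 g g0 (cm1 * τ0)
    rw [hm1] at e1
    rw [hmm1] at e2
    rw [hF g, hF g0, e1, e2, hg0, hA]
    linear_combination (2 * ((1 - p) * (μ1 - c1 * τ0) + p * (μm1 - cm1 * τ0) - g) *
      ((μ1 - c1 * τ0) - (μm1 - cm1 * τ0)) * (p * w1 * c1 - (1 - p) * wm1 * cm1)) * hC1
  refine ⟨hdecomp, hApos, fun g hg => ?_⟩
  have : 0 < A * (g0 - g) ^ 2 := by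
    apply mul_pos hApos
    have : g0 - g ≠ 0 := sub_ne_zero.mpr (Ne.symm hg)
    positivity
  rw [hdecomp g]; linarith
end

section
/- Let p ∈ (0,1) and let w₁, w₋₁, c₁, c₋₁ be real numbers satisfying conditions C1–C3 with w₁ > 0 and w₋₁ > 0. Let Y₁, Y₋₁ be integrable real random variables (on possibly different probability spaces) such that Y₁ − τ₀/2 and Y₋₁ + τ₀/2 are identically distributed. Then for every real number g, the function L(t) = p·w₁·E|Y₁ − g − c₁·t| + (1−p)·w₋₁·E|Y₋₁ − g − c₋₁·t| attains its minimum over t ∈ ℝ at t = τ₀; that is, L(τ₀) ≤ L(t) for all t ∈ ℝ. -/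
open MeasureTheory

/-- Property 3 (L₁ loss): under C1–C3 with positive weights and identically
distributed centered potential outcomes, the weighted L₁ population objective
attains its minimum at τ₀. -/
theorem stmt12 {Ω₁ Ω₂ : Type*} [MeasurableSpace Ω₁] [MeasurableSpace Ω₂]
    (P1 : Measure Ω₁) (P2 : Measure Ω₂)
    [IsProbabilityMeasure P1] [IsProbabilityMeasure P2]
    (p w1 wm1 c1 cm1 τ0 : ℝ) (hp : p ∈ Set.Ioo (0 : ℝ) 1)
    (hC1 : p * w1 * c1 + (1 - p) * wm1 * cm1 = 0)
    (hC2 : c1 - cm1 = 1)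
    (hC3 : w1 * c1 ≠ 0 ∧ wm1 * cm1 ≠ 0)
    (hw1 : 0 < w1) (hwm1 : 0 < wm1)
    (Y1 : Ω₁ → ℝ) (Ym1 : Ω₂ → ℝ)
    (hY1m : Measurable Y1) (hYm1m : Measurable Ym1)
    (hY1i : Integrable Y1 P1) (hYm1i : Integrable Ym1 P2)
    (hid : Measure.map (fun ω => Y1 ω - τ0 / 2) P1
          = Measure.map (fun ω => Ym1 ω + τ0 / 2) P2)
    (g : ℝ) :
    ∀ t : ℝ,
      p * w1 * (∫ ω, |Y1 ω - g - c1 * τ0| ∂P1)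
          + (1 - p) * wm1 * (∫ ω, |Ym1 ω - g - cm1 * τ0| ∂P2)
        ≤ p * w1 * (∫ ω, |Y1 ω - g - c1 * t| ∂P1)
          + (1 - p) * wm1 * (∫ ω, |Ym1 ω - g - cm1 * t| ∂P2) := by
  intro t
  obtain ⟨hp0, hp1⟩ := hp
  have hα : 0 < p * w1 := mul_pos hp0 hw1
  have hβ : 0 < (1 - p) * wm1 := mul_pos (by linarith) hwm1
  -- signs of c1, cm1
  have hcm1ne : cm1 ≠ 0 := right_ne_zero_of_mul hC3.2
  have hcm1neg : cm1 < 0 := by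
    rcases hcm1ne.lt_or_gt with h | h
    · exact h
    · exfalso
      have hc1 : (0:ℝ) < c1 := by linarith
      nlinarith [mul_pos hα hc1, mul_pos hβ h]
  have hc1pos : 0 < c1 := by
    by_contra hle
    push_neg at hle
    nlinarith [mul_pos hβ (neg_pos.mpr hcm1neg)]
  have hc1eq : c1 = cm1 + 1 := by linarith
  subst hc1eq
  -- the common pushforward measure
  set μ := Measure.map (fun ω => Y1 ω - τ0 / 2) P1 with hμ
  have hφ1 : Measurable (fun ω => Y1 ω - τ0 / 2) := hY1m.sub_const _
  have hφ2 : Measurable (fun ω => Ym1 ω + τ0 / 2) := hYm1m.add_const _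
  have hmap1 : ∀ a : ℝ, ∫ z, |z - a| ∂μ = ∫ ω, |Y1 ω - τ0 / 2 - a| ∂P1 := by
    intro a
    rw [hμ]
    exact integral_map hφ1.aemeasurable
      ((measurable_id.sub_const a).abs.aestronglyMeasurable)
  have hmap2 : ∀ a : ℝ, ∫ z, |z - a| ∂μ = ∫ ω, |Ym1 ω + τ0 / 2 - a| ∂P2 := by
    intro a
    rw [hid]
    exact integral_map hφ2.aemeasurable
      ((measurable_id.sub_const a).abs.aestronglyMeasurable)
  have hintμ : Integrable (fun z : ℝ => z) μ := by
    rw [hμ]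
    exact (integrable_map_measure aestronglyMeasurable_id hφ1.aemeasurable).mpr
      (hY1i.sub (integrable_const _))
  have hFint : ∀ a : ℝ, Integrable (fun z : ℝ => |z - a|) μ :=
    fun a => (hintμ.sub (integrable_const a)).abs
  -- convexity of a ↦ ∫ |z - a| dμ
  have hconv : ∀ x y l : ℝ, 0 ≤ l → l ≤ 1 →
      ∫ z, |z - (l * x + (1 - l) * y)| ∂μ
        ≤ l * ∫ z, |z - x| ∂μ + (1 - l) * ∫ z, |z - y| ∂μ := by
    intro x y l hl0 hl1
    have hmono : ∫ z, |z - (l * x + (1 - l) * y)| ∂μ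
        ≤ ∫ z, l * |z - x| + (1 - l) * |z - y| ∂μ := by
      refine integral_mono (hFint _)
        (((hFint x).const_mul l).add ((hFint y).const_mul (1 - l))) (fun z => ?_)
      have h1 : z - (l * x + (1 - l) * y) = l * (z - x) + (1 - l) * (z - y) := by ring
      rw [h1]
      calc |l * (z - x) + (1 - l) * (z - y)|
          ≤ |l * (z - x)| + |(1 - l) * (z - y)| := abs_add_le _ _
        _ = l * |z - x| + (1 - l) * |z - y| := by
            rw [abs_mul, abs_mul, abs_of_nonneg hl0, abs_of_nonneg (by linarith : (0:ℝ) ≤ 1 - l)]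
    rwa [integral_add ((hFint x).const_mul l) ((hFint y).const_mul (1 - l)),
      integral_const_mul, integral_const_mul] at hmono
  -- rewrite all four integrals through μ
  have e1 : ∀ s : ℝ, ∫ ω, |Y1 ω - g - (cm1 + 1) * s| ∂P1
      = ∫ z, |z - (g + (cm1 + 1) * s - τ0 / 2)| ∂μ := by
    intro s
    rw [hmap1]
    refine integral_congr_ae (Filter.Eventually.of_forall fun ω => ?_)
    congr 1
    ring
  have e2 : ∀ s : ℝ, ∫ ω, |Ym1 ω - g - cm1 * s| ∂P2
      = ∫ z, |z - (g + cm1 * s + τ0 / 2)| ∂μ := by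
    intro s
    rw [hmap2]
    refine integral_congr_ae (Filter.Eventually.of_forall fun ω => ?_)
    congr 1
    ring
  rw [e1 τ0, e1 t, e2 τ0, e2 t]
  have harg : g + (cm1 + 1) * τ0 - τ0 / 2 = g + cm1 * τ0 + τ0 / 2 := by ring
  rw [harg]
  set x := g + (cm1 + 1) * t - τ0 / 2 with hx
  set y := g + cm1 * t + τ0 / 2 with hy
  have hkey := hconv x y (-cm1) (by linarith) (by linarith)
  have hcomb : -cm1 * x + (1 - -cm1) * y = g + cm1 * τ0 + τ0 / 2 := by
    rw [hx, hy]; ring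
  rw [hcomb] at hkey
  set Fτ := ∫ z, |z - (g + cm1 * τ0 + τ0 / 2)| ∂μ
  set Fx := ∫ z, |z - x| ∂μ
  set Fy := ∫ z, |z - y| ∂μ
  have hS : (0:ℝ) < p * w1 + (1 - p) * wm1 := by linarith
  have h := mul_le_mul_of_nonneg_left hkey hS.le
  have e3 : (p * w1 + (1 - p) * wm1) * (-cm1 * Fx + (1 - -cm1) * Fy)
      = p * w1 * Fx + (1 - p) * wm1 * Fy := by
    linear_combination (Fy - Fx) * hC1
  rw [e3] at h
  linarith
end

section
/- Let (Ω, ℱ, ℙ) be a probability space, T : Ω → ℝ a random variable with T ∈ {−1, 1} almost surely and ℙ(T = 1) = p ∈ (0,1), and Y : Ω → ℝ integrable, with arm means μ₁, μ₋₁ defined by E[Y·1_{T=1}] = p·μ₁ and E[Y·1_{T=−1}] = (1−p)·μ₋₁. Set τ₀ = μ₁ − μ₋₁. Then for every real number g, E[(T − 2p + 1)·(Y − g − (T/2)·τ₀)] = 0. -/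
open MeasureTheory

/-- Remark 4: the score (T − 2p + 1)·(Y − g − (T/2)·τ₀) has mean zero for any
augmentation constant g. -/
theorem stmt15 {Ω : Type*} [MeasurableSpace Ω] (P : Measure Ω) [IsProbabilityMeasure P]
    (p μ1 μm1 τ0 : ℝ) (hp : p ∈ Set.Ioo (0 : ℝ) 1)
    (T Y : Ω → ℝ) (hT : Measurable T)
    (hT1 : ∀ᵐ ω ∂P, T ω = 1 ∨ T ω = -1)
    (hpT : P {ω | T ω = 1} = ENNReal.ofReal p)
    (hY : Integrable Y P)
    (hμ1 : ∫ ω in {ω | T ω = 1}, Y ω ∂P = p * μ1)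
    (hμm1 : ∫ ω in {ω | T ω = -1}, Y ω ∂P = (1 - p) * μm1)
    (hτ : τ0 = μ1 - μm1) :
    ∀ g : ℝ,
      ∫ ω, (T ω - 2 * p + 1) * (Y ω - g - (T ω / 2) * τ0) ∂P = 0 := by
  intro g
  set A : Set Ω := {ω | T ω = 1} with hA
  set B : Set Ω := {ω | T ω = -1} with hB
  have hAm : MeasurableSet A := hT (measurableSet_singleton 1)
  have hBm : MeasurableSet B := hT (measurableSet_singleton (-1))
  set c1 : ℝ := g + τ0 / 2 with hc1
  set c2 : ℝ := g - τ0 / 2 with hc2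
  -- B =ᵐ Aᶜ
  have hBAc : B =ᵐ[P] (Aᶜ : Set Ω) := by
    apply MeasureTheory.ae_eq_set.2
    constructor
    · have : B \ Aᶜ = ∅ := by
        ext ω
        simp only [Set.mem_diff, Set.mem_compl_iff, hA, hB, Set.mem_setOf_eq,
          Set.mem_empty_iff_false, iff_false, not_and, not_not]
        intro h1 h2
        rw [h2] at h1; norm_num at h1
      simp [this]
    · have h0 : P (A ∪ B)ᶜ = 0 := by
        rw [← MeasureTheory.compl_mem_ae_iff]
        simp only [compl_compl]
        filter_upwards [hT1] with ω hω
        simpa [hA, hB, Set.mem_union] using hω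
      refine measure_mono_null ?_ h0
      intro ω hω
      simp only [Set.mem_diff, Set.mem_compl_iff] at hω
      simp only [Set.mem_compl_iff, Set.mem_union]
      tauto
  have hPA : P A = ENNReal.ofReal p := hpT
  have hPAtop : P A ≠ ⊤ := measure_ne_top _ _
  have hPAc : P Aᶜ = 1 - ENNReal.ofReal p := by
    rw [measure_compl hAm hPAtop, measure_univ, hPA]
  have hPAr : (P A).toReal = p := by
    rw [hPA, ENNReal.toReal_ofReal hp.1.le]
  have hPAcr : (P Aᶜ).toReal = 1 - p := by
    rw [hPAc, ENNReal.toReal_sub_of_le (by simpa using hp.2.le) (by simp)]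
    simp [ENNReal.toReal_ofReal hp.1.le]
  -- the integrand a.e. equals a sum of indicators
  set f1 : Ω → ℝ := fun ω => (2 - 2 * p) * (Y ω - c1) with hf1
  set f2 : Ω → ℝ := fun ω => (-(2 * p)) * (Y ω - c2) with hf2
  have hae : (fun ω => (T ω - 2 * p + 1) * (Y ω - g - (T ω / 2) * τ0))
      =ᵐ[P] fun ω => A.indicator f1 ω + Aᶜ.indicator f2 ω := by
    filter_upwards [hT1] with ω hω
    rcases hω with h | h
    · have hmem : ω ∈ A := by simpa [hA] using h
      rw [Set.indicator_of_mem hmem, Set.indicator_of_notMem (by simpa using hmem)]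
      simp only [h, hf1, hc1]
      ring
    · have hmem : ω ∉ A := by
        simp only [hA, Set.mem_setOf_eq, h]; norm_num
      rw [Set.indicator_of_notMem hmem, Set.indicator_of_mem (by simpa using hmem)]
      simp only [h, hf2, hc2]
      ring
  have hint1 : Integrable (A.indicator f1) P := by
    refine (Integrable.indicator ?_ hAm)
    exact ((hY.sub (integrable_const c1)).const_mul _)
  have hint2 : Integrable (Aᶜ.indicator f2) P := by
    refine (Integrable.indicator ?_ hAm.compl)
    exact ((hY.sub (integrable_const c2)).const_mul _)
  rw [integral_congr_ae hae, integral_add hint1 hint2,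
    integral_indicator hAm, integral_indicator hAm.compl]
  have hI1 : ∫ ω in A, f1 ω ∂P = (2 - 2 * p) * (p * μ1 - p * c1) := by
    simp only [hf1]
    rw [MeasureTheory.integral_const_mul, integral_sub hY.integrableOn (integrableOn_const (measure_ne_top _ _))]
    rw [setIntegral_const, measureReal_def, hPAr, hμ1]
    simp only [smul_eq_mul]
  have hI2 : ∫ ω in Aᶜ, f2 ω ∂P = (-(2 * p)) * ((1 - p) * μm1 - (1 - p) * c2) := by
    have hset : ∫ ω in Aᶜ, f2 ω ∂P = ∫ ω in B, f2 ω ∂P :=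
      (setIntegral_congr_set hBAc).symm
    rw [hset]
    simp only [hf2]
    rw [MeasureTheory.integral_const_mul, integral_sub hY.integrableOn (integrableOn_const (measure_ne_top _ _))]
    rw [setIntegral_const]
    have hPB : (P B).toReal = 1 - p := by
      rw [measure_congr hBAc, hPAcr]
    rw [measureReal_def, hPB, hμm1]
    simp only [smul_eq_mul]
  rw [hI1, hI2]
  simp only [hc1, hc2, hτ]
  ring
end
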